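/- arXiv:2605.20504 — 5 statements merged into one kernel-verified Lean document; each statement's English description precedes it below -/
import Mathlib

section
/- For a ball-box distribution D (a surjection D: Z>0 → Z>0 with nonempty finite fibers of size at most ℓ and D(i) ≤ D(i+1) for all i), the corresponding binary word w_D (whose i-th letter is b if D(i)=D(i+1) and a otherwise) is abelian (k−1)-power free if and only if there is no k-term box progression with respect to D, i.e., no nontrivial k-term arithmetic progression h_1,...,h_k of positive integers such that D(h_1),...,D(h_k) is also an arithmetic progression. -/
def la : Bool := false
def lb : Bool := true

/-- Apply the binary morphism determined by `ha = h(a)`, `hb = h(b)` to a word. -/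
def applyM (ha hb : List Bool) (u : List Bool) : List Bool :=
  (u.map (fun c => if c then hb else ha)).flatten

/-- `w` is an abelian `k`-power: a concatenation of `k` nonempty pairwise anagram blocks. -/
def IsAbelianPow (k : Nat) (w : List Bool) : Prop :=
  ∃ vs : List (List Bool), vs.length = k ∧ (∀ v ∈ vs, v ≠ []) ∧
    vs.Pairwise List.Perm ∧ w = vs.flatten

/-- `w` contains an abelian `k`-power as a factor. -/
def ContainsAbelianPow (k : Nat) (w : List Bool) : Prop :=
  ∃ u, u <:+: w ∧ IsAbelianPow k u

/-- `w` is abelian `k`-power free. -/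
def AbelianPowFree (k : Nat) (w : List Bool) : Prop := ¬ ContainsAbelianPow k w

/-- The morphism `h` is abelian `k`-power free. -/
def MorphAbelianPowFree (k : Nat) (ha hb : List Bool) : Prop :=
  ∀ u : List Bool, AbelianPowFree k u → AbelianPowFree k (applyM ha hb u)

/-- `u` is a (finite) factor of the infinite word `W`. -/
def FactorOfInf (u : List Bool) (W : Nat → Bool) : Prop :=
  ∃ i : Nat, u = (List.range u.length).map (fun j => W (i + j))

/-- `u` is a prefix of the infinite word `W`. -/
def PrefixOfInf (u : List Bool) (W : Nat → Bool) : Prop :=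
  u = (List.range u.length).map W

/-- The binary word associated to a ball-box distribution `D` (balls and boxes labelled by
the positive integers): the `i`-th letter (for `i ≥ 1`, stored at index `i-1`) is `b = true`
iff balls `i` and `i+1` lie in the same box. -/
def wordOf (D : Nat → Nat) : Nat → Bool := fun n => decide (D (n+1) = D (n+2))

section Aux
variable {D : Nat → Nat}

lemma myMono (hmono : ∀ i, 1 ≤ i → D i ≤ D (i+1)) :
    ∀ i j, 1 ≤ i → i ≤ j → D i ≤ D j := by
  intro i j hi hij
  induction j, hij using Nat.le_induction with
  | base => exact le_refl _
  | succ n hn ih => exact ih.trans (hmono n (by omega))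

lemma myStep (hsurj : ∀ m, 1 ≤ m → ∃ i, 1 ≤ i ∧ D i = m)
    (hmono : ∀ i, 1 ≤ i → D i ≤ D (i+1)) :
    ∀ i, 1 ≤ i → D (i+1) ≤ D i + 1 := by
  intro i hi
  by_contra hc
  push_neg at hc
  obtain ⟨j, hj1, hjm⟩ := hsurj (D i + 1) (by omega)
  rcases le_or_gt j i with hle | hlt
  · have := myMono hmono j i hj1 hle; omega
  · have := myMono hmono (i+1) j (by omega) hlt; omega

lemma acount (hsurj : ∀ m, 1 ≤ m → ∃ i, 1 ≤ i ∧ D i = m)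
    (hmono : ∀ i, 1 ≤ i → D i ≤ D (i+1)) :
    ∀ (L i0 : Nat),
    (((List.range L).map (fun j => wordOf D (i0+j))).count false) + D (i0+1) = D (i0+L+1) := by
  intro L
  induction L with
  | zero => intro i0; simp
  | succ n ih =>
    intro i0
    rw [List.range_succ, List.map_append, List.count_append]
    have hstep := myStep hsurj hmono (i0+n+1) (by omega)
    have hmono' := hmono (i0+n+1) (by omega)
    have ihn := ih i0
    have hco : i0 + (n+1) + 1 = i0 + n + 2 := by omega
    rw [hco]
    rw [show i0+n+1+1 = i0+n+2 by omega] at hstep hmono'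
    by_cases hEq : D (i0+n+1) = D (i0+n+2)
    · have : ((([n]).map (fun j => wordOf D (i0+j))).count false) = 0 := by
        simp [wordOf, List.count_cons]
        omega
      omega
    · have : ((([n]).map (fun j => wordOf D (i0+j))).count false) = 1 := by
        simp [wordOf, List.count_cons]
        omega
      omega

lemma join_range_map (f : Nat → Bool) (d : Nat) : ∀ m,
    ((List.range m).map (fun j => (List.range d).map (fun t => f (j*d+t)))).flatten
      = (List.range (m*d)).map f := by
  intro m; induction m with
  | zero => simp
  | succ n ih =>
    rw [List.range_succ, List.map_append, List.flatten_append]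
    rw [ih, Nat.succ_mul, List.range_add, List.map_append, List.map_map]
    simp

lemma bool_count (l : List Bool) : l.count true + l.count false = l.length := by
  induction l with
  | nil => simp
  | cons a t ih => cases a <;> simp [List.count_cons] <;> omega

lemma bool_perm {u v : List Bool} (hl : u.length = v.length)
    (hc : u.count false = v.count false) : u.Perm v := by
  rw [List.perm_iff_count]
  intro a
  cases a
  · exact hc
  · have h1 := bool_count u; have h2 := bool_count v; omega

end Aux

section Key
variable {D : Nat → Nat}

lemma key (hsurj : ∀ m, 1 ≤ m → ∃ i, 1 ≤ i ∧ D i = m)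
    (hmono : ∀ i, 1 ≤ i → D i ≤ D (i+1)) (d e : Nat) :
    ∀ (vs : List (List Bool)) (i0 : Nat),
      (∀ v ∈ vs, v.length = d ∧ v.count false = e) →
      vs.flatten = (List.range vs.flatten.length).map (fun t => wordOf D (i0 + t)) →
      ∀ j, j ≤ vs.length → D (i0 + 1 + j * d) = D (i0 + 1) + j * e := by
  intro vs
  induction vs with
  | nil =>
    intro i0 _ _ j hj
    have : j = 0 := by simpa using hj
    subst this
    simp
  | cons v rest ih =>
    intro i0 hall hjoin j hj
    have hv := hall v (List.mem_cons_self)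
    simp only [List.flatten_cons] at hjoin
    have hlen : (v ++ rest.flatten).length = d + rest.flatten.length := by
      simp [hv.1]
    rw [hlen, List.range_add, List.map_append, List.map_map] at hjoin
    have hlens : v.length = ((List.range d).map (fun t => wordOf D (i0 + t))).length := by
      simp [hv.1]
    obtain ⟨h1, h2⟩ := List.append_inj hjoin hlens
    -- count of first block
    have hac := acount hsurj hmono d i0
    rw [← h1, hv.2] at hac
    -- massage h2 for IH
    have h2' : rest.flatten = (List.range rest.flatten.length).map (fun t => wordOf D ((i0 + d) + t)) := by
      conv_lhs => rw [h2]
      apply List.map_congr_left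
      intro t _
      simp [Function.comp, Nat.add_assoc]
    have hall' : ∀ w ∈ rest, w.length = d ∧ w.count false = e := by
      intro w hw; exact hall w (List.mem_cons_of_mem _ hw)
    cases j with
    | zero => simp
    | succ j' =>
      have hj' : j' ≤ rest.length := by simpa using hj
      have hIH := ih (i0 + d) hall' h2' j' hj'
      rw [show i0 + 1 + (j'+1) * d = (i0 + d) + 1 + j' * d by ring, hIH,
        show i0 + d + 1 = i0 + (d + 1) by ring, ← Nat.add_assoc, ← hac]
      ring
end Key

section Main
variable {D : Nat → Nat}

lemma BP_to_pow (k : Nat) (hk : 2 ≤ k)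
    (hsurj : ∀ m, 1 ≤ m → ∃ i, 1 ≤ i ∧ D i = m)
    (hmono : ∀ i, 1 ≤ i → D i ≤ D (i+1))
    (h : Fin k → Nat) (d e : Int) (hd : 0 < d) (hge1 : ∀ i, 1 ≤ h i)
    (hAP : ∀ i : Fin k, (h i : Int) = (h ⟨0, by omega⟩ : Int) + (i : Nat) * d)
    (hDAP : ∀ i : Fin k, (D (h i) : Int) = (D (h ⟨0, by omega⟩) : Int) + (i : Nat) * e) :
    ∃ u, FactorOfInf u (wordOf D) ∧ IsAbelianPow (k-1) u := by
  set h0 := h ⟨0, by omega⟩ with hh0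
  set dn := d.toNat with hdndef
  have hdn : (dn : Int) = d := Int.toNat_of_nonneg hd.le
  have hdn1 : 1 ≤ dn := by omega
  have h0ge : 1 ≤ h0 := hge1 _
  have hvals : ∀ i : Fin k, h i = h0 + i.val * dn := by
    intro i
    have hi := hAP i
    rw [← hdn] at hi
    exact_mod_cast hi
  have he0 : 0 ≤ e := by
    have h1lt : (1 : Nat) < k := by omega
    have hD1 := hDAP ⟨1, h1lt⟩
    have hv1 := hvals ⟨1, h1lt⟩
    simp only [Fin.val_mk] at hD1 hv1
    have hle : D h0 ≤ D (h ⟨1, h1lt⟩) := by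
      rw [hv1]
      exact myMono hmono h0 (h0 + 1 * dn) h0ge (by omega)
    have hD1' : (D (h ⟨1, h1lt⟩) : Int) = D h0 + e := by rw [hD1]; push_cast; ring
    omega
  set en := e.toNat with hendef
  have hen : (en : Int) = e := Int.toNat_of_nonneg he0
  have hcnt : ∀ j, j < k - 1 →
      ((List.range dn).map (fun t => wordOf D ((h0-1) + (j*dn + t)))).count false = en := by
    intro j hj
    have hac := acount hsurj hmono dn (h0 - 1 + j*dn)
    have hmuldist : (j+1)*dn = j*dn + dn := by ring
    have e1 : h0 - 1 + j*dn + 1 = h0 + j*dn := by omega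
    have e2 : h0 - 1 + j*dn + dn + 1 = h0 + (j+1)*dn := by omega
    rw [e1, e2] at hac
    have hfn : ((List.range dn).map (fun t => wordOf D ((h0-1) + (j*dn + t))))
        = ((List.range dn).map (fun t => wordOf D ((h0 - 1 + j*dn) + t))) := by
      apply List.map_congr_left
      intro t _
      congr 1
      omega
    rw [hfn]
    have hjlt : j < k := by omega
    have hj1lt : j + 1 < k := by omega
    have hv1 := hvals ⟨j, hjlt⟩
    have hv2 := hvals ⟨j+1, hj1lt⟩
    have hD1 := hDAP ⟨j, hjlt⟩
    have hD2 := hDAP ⟨j+1, hj1lt⟩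
    simp only [Fin.val_mk] at hv1 hv2 hD1 hD2
    rw [hv1] at hD1
    rw [hv2] at hD2
    have hcast : ((j+1 : Nat) : Int) * e = (j : Nat) * e + e := by push_cast; ring
    rw [hcast] at hD2
    omega
  set f : Nat → Bool := fun t => wordOf D ((h0-1) + t) with hf
  set vs : List (List Bool) :=
    (List.range (k-1)).map (fun j => (List.range dn).map (fun t => f (j*dn + t))) with hvs
  have hjoin : vs.flatten = (List.range ((k-1)*dn)).map f := join_range_map f dn (k-1)
  refine ⟨vs.flatten, ⟨h0 - 1, ?_⟩, vs, ?_, ?_, ?_, rfl⟩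
  · rw [hjoin]
    simp [hf]
  · simp [hvs]
  · intro v hv
    simp only [hvs, List.mem_map, List.mem_range] at hv
    obtain ⟨j, hj, rfl⟩ := hv
    have : ((List.range dn).map (fun t => f (j*dn + t))).length = dn := by simp
    intro hnil
    rw [hnil] at this
    simp at this
    omega
  · apply List.pairwise_of_forall_mem_list
    intro a ha b hb
    simp only [hvs, List.mem_map, List.mem_range] at ha hb
    obtain ⟨ja, hja, rfl⟩ := ha
    obtain ⟨jb, hjb, rfl⟩ := hb
    apply bool_perm
    · simp
    · rw [hcnt ja hja, hcnt jb hjb]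
end Main

/-- For an `ℓ`-ball-box distribution `D`, the associated word `w_D` is
abelian `(k-1)`-power free iff there is no `k`-term box progression with respect to `D`. -/
theorem ballBox_word_iff_no_BP (ℓ k : Nat) (hℓ : 2 ≤ ℓ) (hk : 2 ≤ k) (D : Nat → Nat)
    (hsurj : ∀ m, 1 ≤ m → ∃ i, 1 ≤ i ∧ D i = m)
    (hfin : ∀ m, 1 ≤ m → {i : Nat | 1 ≤ i ∧ D i = m}.Finite)
    (hcard : ∀ m, 1 ≤ m → {i : Nat | 1 ≤ i ∧ D i = m}.ncard ≤ ℓ)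
    (hmono : ∀ i, 1 ≤ i → D i ≤ D (i+1)) :
    (∀ u : List Bool, FactorOfInf u (wordOf D) → ¬ IsAbelianPow (k-1) u) ↔
      ¬ ∃ (h : Fin k → Nat) (d e : Int), d ≠ 0 ∧ (∀ i, 1 ≤ h i) ∧
        (∀ i : Fin k, (h i : Int) = (h ⟨0, by omega⟩ : Int) + (i : Nat) * d) ∧
        (∀ i : Fin k, (D (h i) : Int) = (D (h ⟨0, by omega⟩) : Int) + (i : Nat) * e) := by
  constructor
  · intro hfree
    rintro ⟨h, d, e, hd, hge1, hAP, hDAP⟩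
    rcases hd.lt_or_gt with hneg | hpos
    · -- reverse the progression
      set h' : Fin k → Nat := fun i => h ⟨k-1-i.val, by omega⟩ with hh'
      have hAP' : ∀ i : Fin k, (h' i : Int) = (h' ⟨0, by omega⟩ : Int) + (i : Nat) * (-d) := by
        intro i
        have hle : i.val ≤ k - 1 := by have := i.isLt; omega
        have hi := hAP ⟨k-1-i.val, by omega⟩
        have hlast := hAP ⟨k-1, by omega⟩
        simp only [Fin.val_mk] at hi hlast
        have hcs : ((k-1-i.val : Nat) : Int) = ((k-1 : Nat) : Int) - (i.val : Int) :=
          Nat.cast_sub hle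
        simp only [hh', Fin.val_mk, Nat.sub_zero]
        linear_combination hi - hlast + d * hcs
      have hDAP' : ∀ i : Fin k, (D (h' i) : Int)
          = (D (h' ⟨0, by omega⟩) : Int) + (i : Nat) * (-e) := by
        intro i
        have hle : i.val ≤ k - 1 := by have := i.isLt; omega
        have hi := hDAP ⟨k-1-i.val, by omega⟩
        have hlast := hDAP ⟨k-1, by omega⟩
        simp only [Fin.val_mk] at hi hlast
        have hcs : ((k-1-i.val : Nat) : Int) = ((k-1 : Nat) : Int) - (i.val : Int) :=
          Nat.cast_sub hle
        simp only [hh', Fin.val_mk, Nat.sub_zero]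
        linear_combination hi - hlast + e * hcs
      obtain ⟨u, hf, hp⟩ := BP_to_pow k hk hsurj hmono h' (-d) (-e)
        (by omega) (fun i => hge1 _) hAP' hDAP'
      exact hfree u hf hp
    · obtain ⟨u, hf, hp⟩ := BP_to_pow k hk hsurj hmono h d e hpos hge1 hAP hDAP
      exact hfree u hf hp
  · intro hnoBP u hfac hpow
    obtain ⟨i0, hu⟩ := hfac
    obtain ⟨vs, hlen, hne, hpw, hjoin⟩ := hpow
    cases vs with
    | nil => simp at hlen; omega
    | cons v0 rest =>
      set d := v0.length with hd
      set e := v0.count false with he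
      have hd1 : 1 ≤ d := by
        have := hne v0 (List.mem_cons_self)
        rw [hd]
        exact List.length_pos_iff.mpr this
      have hall : ∀ w ∈ v0 :: rest, w.length = d ∧ w.count false = e := by
        intro w hw
        rcases List.mem_cons.mp hw with rfl | hw'
        · exact ⟨rfl, rfl⟩
        · have hperm : v0.Perm w := (List.pairwise_cons.mp hpw).1 w hw'
          exact ⟨(hperm.length_eq).symm, (hperm.count_eq false).symm⟩
      rw [hjoin] at hu
      have hkey := key hsurj hmono d e (v0 :: rest) i0 hall hu
      have hlen' : (v0 :: rest).length = k - 1 := hlen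
      apply hnoBP
      refine ⟨fun i => i0 + 1 + i.val * d, (d : Int), (e : Int), ?_, ?_, ?_, ?_⟩
      · exact Int.natCast_ne_zero.mpr (by omega)
      · intro i
        show 1 ≤ i0 + 1 + i.val * d
        have := Nat.zero_le (i.val * d)
        omega
      · intro i
        simp only [Fin.val_mk]
        push_cast
        ring
      · intro i
        have hile : i.val ≤ (v0 :: rest).length := by
          rw [hlen']; have := i.isLt; omega
        have := hkey i.val hile
        simp only [Fin.val_mk]
        rw [Nat.zero_mul, Nat.add_zero, this]
        push_cast
        ring
end

section
/- Let h: {a,b}* → {a,b}* be the morphism with h(a) = aaaba and h(b) = bab, and let Ω_1 = h^ω(a) be its infinite fixed point starting with a. Then Ω_1 contains neither aaaaa nor bb as a factor. -/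
/-- Automaton state step: 0 = start, 1–4 = trailing run of `a`s, 5 = last char `b`, 6 = dead. -/
def stp (s : Nat) (c : Bool) : Nat :=
  if 6 ≤ s then 6
  else if c then (if s = 5 then 6 else 5)
  else (if s = 0 ∨ s = 5 then 1 else if s = 4 then 6 else s + 1)

def sigm (s : Nat) : Nat :=
  if s = 0 then 0 else if s = 5 then 5 else if 6 ≤ s then 6 else 1

lemma stp_lt : ∀ s < 7, ∀ c, stp s c < 7 := by decide

lemma foldl_dead : ∀ w : List Bool, List.foldl stp 6 w = 6 := by
  intro w
  induction w with
  | nil => rfl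
  | cons c t ih => simpa [stp] using ih

lemma foldl_lt7 : ∀ (w : List Bool) (s : Nat), s < 7 → List.foldl stp s w < 7 := by
  intro w
  induction w with
  | nil => intro s hs; exact hs
  | cons c t ih => intro s hs; exact ih _ (stp_lt s hs c)

lemma blockOK : ∀ s < 7, ∀ c : Bool, stp s c ≠ 6 →
    List.foldl stp (sigm s) (if c then [lb,la,lb] else [la,la,la,lb,la]) = sigm (stp s c) := by
  decide

lemma sim : ∀ (u : List Bool) (s : Nat), s < 7 → List.foldl stp s u ≠ 6 →
    List.foldl stp (sigm s) (applyM [la,la,la,lb,la] [lb,la,lb] u) = sigm (List.foldl stp s u) := by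
  intro u
  induction u with
  | nil => intro s hs h; simp [applyM]
  | cons c t ih =>
    intro s hs h
    have hcons : List.foldl stp s (c :: t) = List.foldl stp (stp s c) t := rfl
    have hstep : stp s c ≠ 6 := by
      intro h6
      apply h
      rw [hcons, h6, foldl_dead]
    have happ : applyM [la,la,la,lb,la] [lb,la,lb] (c :: t)
        = (if c then [lb,la,lb] else [la,la,la,lb,la]) ++ applyM [la,la,la,lb,la] [lb,la,lb] t := by
      simp [applyM]
    rw [happ, List.foldl_append, blockOK s hs c hstep, hcons]
    exact ih (stp s c) (stp_lt s hs c) (by rw [hcons] at h; exact h)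

lemma sigm_ne6 : ∀ s < 7, s ≠ 6 → sigm s ≠ 6 := by decide

lemma good_n : ∀ n : Nat, List.foldl stp 0 ((applyM [la,la,la,lb,la] [lb,la,lb])^[n] [la]) ≠ 6 := by
  intro n
  induction n with
  | zero => decide
  | succ n ih =>
    rw [Function.iterate_succ_apply']
    have hs := sim _ 0 (by norm_num) ih
    rw [show sigm 0 = 0 from rfl] at hs
    rw [hs]
    exact sigm_ne6 _ (foldl_lt7 _ 0 (by norm_num)) ih

lemma applyM_len : ∀ u : List Bool, 3 * u.length ≤ (applyM [la,la,la,lb,la] [lb,la,lb] u).length := by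
  intro u
  induction u with
  | nil => simp [applyM]
  | cons c t ih =>
    have : applyM [la,la,la,lb,la] [lb,la,lb] (c :: t)
        = (if c then [lb,la,lb] else [la,la,la,lb,la]) ++ applyM [la,la,la,lb,la] [lb,la,lb] t := by
      simp [applyM]
    rw [this, List.length_append, List.length_cons]
    cases c <;> simp <;> omega

lemma len_n : ∀ n : Nat, n + 1 ≤ ((applyM [la,la,la,lb,la] [lb,la,lb])^[n] [la]).length := by
  intro n
  induction n with
  | zero => simp
  | succ n ih =>
    rw [Function.iterate_succ_apply']
    have := applyM_len ((applyM [la,la,la,lb,la] [lb,la,lb])^[n] [la])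
    omega

lemma die_a5 : ∀ s < 7, List.foldl stp s [la,la,la,la,la] = 6 := by decide
lemma die_bb : ∀ s < 7, List.foldl stp s [lb,lb] = 6 := by decide

lemma factor_dies (pat : List Bool) (hpat : ∀ s < 7, List.foldl stp s pat = 6)
    (w : List Bool) (i : Nat) (hlen : i + pat.length ≤ w.length)
    (hget : ∀ j (hj : j < pat.length), w[i+j]'(by omega) = pat[j]) :
    List.foldl stp 0 w = 6 := by
  have htk : (w.drop i).take pat.length = pat := by
    apply List.ext_getElem
    · simp; omega
    · intro j h1 h2
      have hj : j < pat.length := h2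
      rw [List.getElem_take, List.getElem_drop]
      rw [← hget j hj]
  have hw : w = w.take i ++ (pat ++ w.drop (i + pat.length)) := by
    conv_lhs => rw [← List.take_append_drop i w]
    congr 1
    conv_lhs => rw [← List.take_append_drop pat.length (w.drop i)]
    rw [htk, List.drop_drop]
  rw [hw, List.foldl_append, List.foldl_append]
  rw [hpat _ (foldl_lt7 _ 0 (by norm_num)), foldl_dead]

lemma no_factor (pat : List Bool) (hpat : ∀ s < 7, List.foldl stp s pat = 6)
    (W : Nat → Bool)
    (hW : ∀ n : Nat, PrefixOfInf ((applyM [la,la,la,lb,la] [lb,la,lb])^[n] [la]) W) :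
    ¬ FactorOfInf pat W := by
  rintro ⟨i, hi⟩
  set n := i + pat.length with hn
  set w := (applyM [la,la,la,lb,la] [lb,la,lb])^[n] [la] with hwdef
  have hlenw : n + 1 ≤ w.length := len_n n
  have hlen : i + pat.length ≤ w.length := by omega
  have hp : w = (List.range w.length).map W := hW n
  have hget : ∀ j (hj : j < pat.length), w[i+j]'(by omega) = pat[j] := by
    intro j hj
    have hm : i + j < w.length := by omega
    have e1 : w[i+j]'hm = W (i+j) := by
      have := List.getElem_of_eq hp hm
      simpa using this
    have e2 : pat[j]'hj = W (i+j) := by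
      have := List.getElem_of_eq hi hj
      simpa using this
    rw [e1, e2]
  exact good_n n (factor_dies pat hpat w i hlen hget)

/-- the infinite fixed point of `h(a) = aaaba`, `h(b) = bab` starting with `a`
contains neither `aaaaa` nor `bb` as a factor. -/
theorem fixedPoint_avoids_a5_bb (W : Nat → Bool)
    (hW : ∀ n : Nat, PrefixOfInf ((applyM [la,la,la,lb,la] [lb,la,lb])^[n] [la]) W) :
    ¬ FactorOfInf [la,la,la,la,la] W ∧ ¬ FactorOfInf [lb,lb] W := by
  exact ⟨no_factor _ die_a5 W hW, no_factor _ die_bb W hW⟩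
end

section
/- Let h: {a,b}* → {a,b}* be the morphism with h(a) = abaabaababa and h(b) = babababab, and let Ω_3 = h^ω(a). Then Ω_3 contains neither aaa nor bb as a factor. -/
def Ha : List Bool := [la, lb, la, la, lb, la, la, lb, la, lb, la]
def Hb : List Bool := [lb, la, lb, la, lb, la, lb, la, lb]

/-- State machine checking: no two consecutive `true`, no three consecutive `false`.
States: 0 = start, 1 = one trailing false, 2 = two trailing falses, 3 = trailing true. -/
def run : Nat → List Bool → Bool
  | _, [] => true
  | s, c :: t =>
    if c then (if s = 3 then false else run 3 t)
    else (if s = 2 then false else run (if s = 1 then 2 else 1) t)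

lemma applyM_cons (c : Bool) (u : List Bool) :
    applyM Ha Hb (c :: u) = (if c then Hb else Ha) ++ applyM Ha Hb u := by
  simp [applyM]

lemma run_two_one (t : List Bool) (h : run 2 t = true) : run 1 t = true := by
  cases t with
  | nil => simp [run]
  | cons c t =>
    cases c
    · simp [run] at h
    · simp [run] at h ⊢; exact h

lemma key_s11 : ∀ (u : List Bool) (s : Nat), s = 0 ∨ s = 1 ∨ s = 3 →
    run s u = true → run s (applyM Ha Hb u) = true := by
  intro u
  induction u with
  | nil => rintro s _ _; simp [applyM, run]
  | cons d u ih =>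
    rintro s hs h
    rw [applyM_cons]
    cases d
    · rcases hs with rfl | rfl | rfl
      · simp [run, Ha, Hb, la, lb] at h ⊢
        exact ih 1 (by tauto) h
      · simp [run, Ha, Hb, la, lb] at h ⊢
        exact ih 1 (by tauto) (run_two_one u h)
      · simp [run, Ha, Hb, la, lb] at h ⊢
        exact ih 1 (by tauto) h
    · rcases hs with rfl | rfl | rfl
      · simp [run, Ha, Hb, la, lb] at h ⊢
        exact ih 3 (by tauto) h
      · simp [run, Ha, Hb, la, lb] at h ⊢
        exact ih 3 (by tauto) h
      · simp [run] at h

lemma len_apply : ∀ v : List Bool, 2 * v.length ≤ (applyM Ha Hb v).length := by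
  intro v
  induction v with
  | nil => simp [applyM]
  | cons c v ih =>
    rw [applyM_cons]
    have h9 : Hb.length = 9 := rfl
    have h11 : Ha.length = 11 := rfl
    cases c <;> simp only [if_true, if_false, Bool.false_eq_true, ite_true, ite_false,
      List.length_append, List.length_cons, h9, h11] <;> omega

lemma iter_good (n : Nat) : run 0 ((applyM Ha Hb)^[n] [la]) = true := by
  induction n with
  | zero => simp [run, la]
  | succ n ih =>
    rw [Function.iterate_succ_apply']
    exact key_s11 _ 0 (Or.inl rfl) ih

lemma iter_len (n : Nat) : n + 1 ≤ ((applyM Ha Hb)^[n] [la]).length := by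
  induction n with
  | zero => simp
  | succ n ih =>
    rw [Function.iterate_succ_apply']
    have := len_apply ((applyM Ha Hb)^[n] [la])
    omega

lemma no_tt : ∀ (i : Nat) (w : List Bool) (s : Nat),
    w[i]? = some true → w[i+1]? = some true → run s w = false := by
  intro i
  induction i with
  | zero =>
    intro w s h1 h2
    match w with
    | [] => simp at h1
    | [c] => simp at h2
    | c :: d :: t =>
      simp at h1 h2
      subst h1; subst h2
      by_cases h3 : s = 3 <;> simp [run, h3]
  | succ i ih =>
    intro w s h1 h2
    match w with
    | [] => simp at h1
    | c :: t =>
      simp only [List.getElem?_cons_succ] at h1 h2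
      cases c
      · by_cases h3 : s = 2
        · simp [run, h3]
        · simp [run, h3]
          exact ih t _ h1 h2
      · by_cases h3 : s = 3
        · simp [run, h3]
        · simp [run, h3]
          exact ih t _ h1 h2

lemma no_fff : ∀ (i : Nat) (w : List Bool) (s : Nat),
    w[i]? = some false → w[i+1]? = some false → w[i+2]? = some false →
    run s w = false := by
  intro i
  induction i with
  | zero =>
    intro w s h1 h2 h3
    match w with
    | [] => simp at h1
    | [c] => simp at h2
    | [c, d] => simp at h3
    | c :: d :: e :: t =>
      simp at h1 h2 h3
      subst h1; subst h2; subst h3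
      by_cases k2 : s = 2 <;> by_cases k1 : s = 1 <;> simp [run, k1, k2]
  | succ i ih =>
    intro w s h1 h2 h3
    match w with
    | [] => simp at h1
    | c :: t =>
      simp only [List.getElem?_cons_succ] at h1 h2 h3
      cases c
      · by_cases k2 : s = 2
        · simp [run, k2]
        · simp [run, k2]
          exact ih t _ h1 h2 h3
      · by_cases k3 : s = 3
        · simp [run, k3]
        · simp [run, k3]
          exact ih t _ h1 h2 h3

lemma prefix_get (u : List Bool) (hpre : u = (List.range u.length).map W)
    (i : Nat) (hi : i < u.length) : u[i]? = some (W i) := by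
  conv_lhs => rw [hpre]
  rw [List.getElem?_map]
  rw [List.getElem?_range (by simpa using hi)]
  rfl

/-- the infinite fixed point of `h(a) = abaabaababa`, `h(b) = babababab`
contains neither `aaa` nor `bb` as a factor. -/
theorem fixedPoint_avoids_a3_bb (W : Nat → Bool)
    (hW : ∀ n : Nat,
      PrefixOfInf ((applyM [la, lb, la, la, lb, la, la, lb, la, lb, la]
        [lb, la, lb, la, lb, la, lb, la, lb])^[n] [la]) W) :
    ¬ FactorOfInf [la,la,la] W ∧ ¬ FactorOfInf [lb,lb] W := by
  have hg := iter_good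
  have hl := iter_len
  constructor
  · rintro ⟨i, hfac⟩
    simp [List.range_succ, la] at hfac
    obtain ⟨h0, h1, h2⟩ := hfac
    set u := (applyM Ha Hb)^[i+2] [la] with hu
    have hlen : i + 2 < u.length := by have := hl (i+2); rw [← hu] at this; omega
    have hpre : u = (List.range u.length).map W := hW (i+2)
    have g0 : u[i]? = some false := by rw [prefix_get u hpre i (by omega), h0]
    have g1 : u[i+1]? = some false := by rw [prefix_get u hpre (i+1) (by omega), h1]
    have g2 : u[i+2]? = some false := by rw [prefix_get u hpre (i+2) hlen, h2]
    have := no_fff i u 0 g0 g1 g2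
    rw [hu] at this
    rw [hg (i+2)] at this
    simp at this
  · rintro ⟨i, hfac⟩
    simp [List.range_succ, lb] at hfac
    obtain ⟨h0, h1⟩ := hfac
    set u := (applyM Ha Hb)^[i+1] [la] with hu
    have hlen : i + 1 < u.length := by have := hl (i+1); rw [← hu] at this; omega
    have hpre : u = (List.range u.length).map W := hW (i+1)
    have g0 : u[i]? = some true := by rw [prefix_get u hpre i (by omega), h0]
    have g1 : u[i+1]? = some true := by rw [prefix_get u hpre (i+1) hlen, h1]
    have := no_tt i u 0 g0 g1
    rw [hu] at this
    rw [hg (i+1)] at this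
    simp at this
end

section
/- Every binary word over {a,b} of length 18 avoiding the factor bb contains an abelian 4-power, and the word babaaabaaabaaabab of length 17 avoids bb and contains no abelian 4-power. -/
def cnt (l : List Bool) : Nat := l.count true
def blk (u : List Bool) (m i : Nat) : List Bool := (u.drop (m*i)).take m
def eqcounts (u : List Bool) (m : Nat) : Bool :=
  (cnt (blk u m 0) == cnt (blk u m 1)) && (cnt (blk u m 1) == cnt (blk u m 2)) &&
    (cnt (blk u m 2) == cnt (blk u m 3))
def hasPS (w : List Bool) : Bool :=
  (List.range (w.length / 4)).any fun j => eqcounts (w.drop (w.length - 4*(j+1))) (j+1)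

lemma count_false_add (l : List Bool) : l.count false + l.count true = l.length := by
  induction l with
  | nil => simp
  | cons h t ih => cases h <;> simp [List.count_cons] <;> omega

lemma perm_iff (v w : List Bool) :
    v.Perm w ↔ v.length = w.length ∧ v.count true = w.count true := by
  constructor
  · intro h; exact ⟨h.length_eq, h.count_eq true⟩
  · rintro ⟨h1, h2⟩
    rw [List.perm_iff_count]
    intro b; cases b
    · have := count_false_add v; have := count_false_add w; omega
    · exact h2

lemma pow_of_eqcounts (u : List Bool) (m : Nat) (h1 : 1 ≤ m) (h2 : u.length = 4*m)
    (h3 : eqcounts u m = true) : IsAbelianPow 4 u := by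
  have hL : ∀ i, i ≤ 3 → (blk u m i).length = m := by
    intro i hi
    simp only [blk, List.length_take, List.length_drop, h2]
    interval_cases i <;> omega
  have hjoin : u = blk u m 0 ++ (blk u m 1 ++ (blk u m 2 ++ blk u m 3)) := by
    have e0 : blk u m 0 = u.take m := by simp [blk]
    have e1 : blk u m 1 = (u.drop m).take m := by simp [blk]
    have e2 : blk u m 2 = ((u.drop m).drop m).take m := by
      rw [blk, List.drop_drop, show m + m = m*2 from by ring]
    have e3 : blk u m 3 = ((u.drop m).drop m).drop m := by
      rw [blk, List.drop_drop, List.drop_drop, show m*3 = m+(m+m) from by ring]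
      apply List.take_of_length_le
      simp only [List.length_drop, h2]; omega
    rw [e0, e1, e2, e3, List.take_append_drop, List.take_append_drop, List.take_append_drop]
  simp only [eqcounts, Bool.and_eq_true, beq_iff_eq, cnt] at h3
  obtain ⟨⟨c01, c12⟩, c23⟩ := h3
  have hperm : ∀ i, i ≤ 3 → ∀ j, j ≤ 3 → (blk u m i).Perm (blk u m j) := by
    intro i hi j hj
    rw [perm_iff, hL i hi, hL j hj]
    refine ⟨rfl, ?_⟩
    interval_cases i <;> interval_cases j <;> omega
  refine ⟨[blk u m 0, blk u m 1, blk u m 2, blk u m 3], rfl, ?_, ?_, by simpa using hjoin⟩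
  · intro v hv
    have hvl : v.length = m := by
      simp only [List.mem_cons, List.not_mem_nil, or_false] at hv
      rcases hv with h|h|h|h <;> subst h <;> [exact hL 0 (by omega); exact hL 1 (by omega);
        exact hL 2 (by omega); exact hL 3 (by omega)]
    intro hnil; rw [hnil] at hvl; simp at hvl; omega
  · rw [List.pairwise_iff_getElem]
    intro i j hi hj hij
    simp only [List.length_cons, List.length_nil] at hi hj
    interval_cases i <;> interval_cases j <;> simp <;> apply hperm <;> omega

lemma pow_gives (u : List Bool) (h : IsAbelianPow 4 u) :
    ∃ m, 1 ≤ m ∧ u.length = 4*m ∧ eqcounts u m = true := by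
  obtain ⟨vs, hlen, hne, hpw, hjoin⟩ := h
  rcases vs with _|⟨a, _|⟨b, _|⟨c, _|⟨d, rest⟩⟩⟩⟩ <;> simp_all
  obtain ⟨⟨pab, pac, pad⟩, ⟨pbc, pbd⟩, pcd⟩ := hpw
  obtain ⟨ha, hb2, hc2, hd2⟩ := hne
  set m := a.length with hm
  have hbl : b.length = m := pab.length_eq.symm
  have hcl : c.length = m := pac.length_eq.symm
  have hdl : d.length = m := pad.length_eq.symm
  have ha1 : 1 ≤ m := by
    cases a
    · simp at ha
    · simp [hm]
  refine ⟨m, ha1, by omega, ?_⟩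
  have e0 : blk (a ++ (b ++ (c ++ d))) m 0 = a := by
    rw [blk, Nat.mul_zero, List.drop_zero, List.take_left' hm.symm]
  have e1 : blk (a ++ (b ++ (c ++ d))) m 1 = b := by
    rw [blk, Nat.mul_one, List.drop_left' hm.symm, List.take_left' hbl]
  have e2 : blk (a ++ (b ++ (c ++ d))) m 2 = c := by
    rw [blk, show a ++ (b ++ (c ++ d)) = (a ++ b) ++ (c ++ d) from by simp,
      List.drop_left' (l₂ := c ++ d) (by simp only [List.length_append]; omega),
      List.take_left' hcl]
  have e3 : blk (a ++ (b ++ (c ++ d))) m 3 = d := by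
    rw [blk, show a ++ (b ++ (c ++ d)) = (a ++ (b ++ c)) ++ d from by simp,
      List.drop_left' (l₂ := d) (by simp only [List.length_append]; omega),
      List.take_of_length_le (le_of_eq hdl)]
  simp only [eqcounts, e0, e1, e2, e3, Bool.and_eq_true, beq_iff_eq, cnt]
  exact ⟨⟨pab.count_eq true, pbc.count_eq true⟩, pcd.count_eq true⟩

lemma contains_of_hasPS (w : List Bool) (h : hasPS w = true) : ContainsAbelianPow 4 w := by
  simp only [hasPS, List.any_eq_true, List.mem_range] at h
  obtain ⟨j, hj, he⟩ := h
  set m := j + 1 with hm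
  have h4 : 4*m ≤ w.length := by
    have : m ≤ w.length / 4 := by omega
    have := (Nat.le_div_iff_mul_le (by norm_num)).mp this
    omega
  refine ⟨w.drop (w.length - 4*m), (List.drop_suffix _ _).isInfix, ?_⟩
  apply pow_of_eqcounts _ m (by omega)
  · simp only [List.length_drop]; omega
  · exact he

def contains4 (w : List Bool) : Bool :=
  (List.range (w.length+1)).any fun i => hasPS (w.take i)

lemma contains4_of_contains (w : List Bool) (h : ContainsAbelianPow 4 w) :
    contains4 w = true := by
  obtain ⟨u, ⟨s, t, hst⟩, hpow⟩ := h
  obtain ⟨m, hm, hlen, he⟩ := pow_gives u hpow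
  simp only [contains4, List.any_eq_true, List.mem_range]
  refine ⟨(s ++ u).length, ?_, ?_⟩
  · rw [← hst]; simp [List.length_append]
  · have htake : w.take (s ++ u).length = s ++ u := by
      rw [← hst, List.take_left]
    rw [htake]
    simp only [hasPS, List.any_eq_true, List.mem_range]
    refine ⟨m - 1, ?_, ?_⟩
    · have h4 : 4*m ≤ (s ++ u).length := by simp only [List.length_append, hlen]; omega
      have : m ≤ (s ++ u).length / 4 := (Nat.le_div_iff_mul_le (by norm_num)).mpr (by omega)
      omega
    · rw [show m - 1 + 1 = m from by omega]
      have hd : (s ++ u).drop ((s ++ u).length - 4*m) = u := by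
        rw [show (s ++ u).length - 4*m = s.length from by
          simp only [List.length_append, hlen]; omega]
        exact List.drop_left
      rw [hd]; exact he

def search : Nat → List Bool → Bool
  | 0, w => hasPS w
  | n+1, w => hasPS w || (search n (w ++ [la]) && ((w.getLast? == some lb) || search n (w ++ [lb])))

lemma search_sound : ∀ n w v, search n w = true → v.length = n →
    ¬ [lb,lb] <:+: (w ++ v) → ContainsAbelianPow 4 (w ++ v) := by
  intro n
  induction n with
  | zero =>
    intro w v hs hv _
    have hvnil : v = [] := List.eq_nil_of_length_eq_zero hv
    subst hvnil
    simpa using contains_of_hasPS w hs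
  | succ n ih =>
    intro w v hs hv hbb
    cases v with
    | nil => simp at hv
    | cons c v' =>
      by_cases hps : hasPS w = true
      · obtain ⟨x, hx, hp⟩ := contains_of_hasPS w hps
        exact ⟨x, hx.trans (List.prefix_append w _).isInfix, hp⟩
      · rw [show search (n+1) w = (hasPS w || (search n (w ++ [la]) &&
            ((w.getLast? == some lb) || search n (w ++ [lb])))) from rfl] at hs
        rw [show hasPS w = false from by simpa using hps] at hs
        simp only [Bool.false_or, Bool.and_eq_true, Bool.or_eq_true] at hs
        obtain ⟨hsa, hsb⟩ := hs
        have hlen' : v'.length = n := by simpa using hv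
        cases c with
        | false =>
          have hassoc : w ++ (false :: v') = (w ++ [la]) ++ v' := by simp [la]
          rw [hassoc]
          exact ih (w ++ [la]) v' hsa hlen' (by rw [← hassoc]; exact hbb)
        | true =>
          have hassoc : w ++ (true :: v') = (w ++ [lb]) ++ v' := by simp [lb]
          rcases hsb with hlast | hsb
          · have hl : w.getLast? = some lb := by simpa using hlast
            obtain ⟨w', hw'⟩ := List.getLast?_eq_some_iff.mp hl
            exfalso
            apply hbb
            refine ⟨w', v', ?_⟩
            rw [hw']
            simp [lb]
          · rw [hassoc]
            exact ih (w ++ [lb]) v' hsb hlen' (by rw [← hassoc]; exact hbb)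


/-- every binary word of length 18 avoiding `bb` contains an abelian 4-power,
and `babaaabaaabaaabab` (length 17) avoids `bb` and contains no abelian 4-power. -/
theorem length18_bbfree_has_abelian_4power :
    (∀ w : List Bool, w.length = 18 → ¬ [lb,lb] <:+: w → ContainsAbelianPow 4 w) ∧
    (¬ [lb,lb] <:+: [lb, la, lb, la, la, la, lb, la, la, la, lb, la, la, la, lb, la, lb] ∧
      ¬ ContainsAbelianPow 4
        [lb, la, lb, la, la, la, lb, la, la, la, lb, la, la, la, lb, la, lb]) := by
  refine ⟨?_, ?_, ?_⟩
  · intro w hw hbb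
    have hsearch : search 18 [] = true := by decide
    have := search_sound 18 [] w hsearch hw (by simpa using hbb)
    simpa using this
  · decide
  · intro h
    have h1 := contains4_of_contains _ h
    have h2 : contains4 [lb, la, lb, la, la, la, lb, la, la, la, lb, la, la, la, lb, la, lb]
        = false := by decide
    rw [h1] at h2
    cases h2
end

section
/- Every binary word over {a,b} of length 25 avoiding both factors aaa and bb contains an abelian 5-power, and the word aababaababaababaababaaba of length 24 avoids aaa and bb and contains no abelian 5-power. -/
/- ### auxiliary development -/

def PreAP (w : List Bool) : Prop :=
  ∃ m < w.length + 1, 0 < m ∧ 5*m ≤ w.length ∧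
    ∀ j < 4, ((w.drop (j*m)).take m).Perm ((w.drop (j*m+m)).take m)

instance (w : List Bool) : Decidable (PreAP w) := by unfold PreAP; exact inferInstance

lemma take_blocks (w : List Bool) (m : Nat) :
    ∀ k, w.take (k*m) = ((List.range k).map (fun j => (w.drop (j*m)).take m)).flatten := by
  intro k
  induction k with
  | zero => simp
  | succ n ih =>
      rw [List.range_succ, List.map_append, List.flatten_append, ← ih]
      simp only [List.map_cons, List.map_nil, List.flatten_cons, List.flatten_nil, List.append_nil]
      rw [show (n+1)*m = n*m + m by ring, List.take_add]

lemma pairwise_perm_chain {x0 x1 x2 x3 x4 : List Bool} (h01 : x0.Perm x1) (h12 : x1.Perm x2)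
    (h23 : x2.Perm x3) (h34 : x3.Perm x4) : List.Pairwise List.Perm [x0,x1,x2,x3,x4] := by
  have h02 := h01.trans h12
  have h03 := h02.trans h23
  have h04 := h03.trans h34
  have h13 := h12.trans h23
  have h14 := h13.trans h34
  have h24 := h23.trans h34
  refine .cons (fun v hv => ?_) (.cons (fun v hv => ?_) (.cons (fun v hv => ?_)
    (.cons (fun v hv => ?_) (.cons (fun v hv => ?_) .nil)))) <;>
    simp only [List.mem_cons, List.not_mem_nil, or_false] at hv
  · rcases hv with rfl | rfl | rfl | rfl <;> assumption
  · rcases hv with rfl | rfl | rfl <;> assumption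
  · rcases hv with rfl | rfl <;> assumption
  · rcases hv with rfl <;> assumption

lemma preAP_iff (w : List Bool) : (∃ u, u <+: w ∧ IsAbelianPow 5 u) ↔ PreAP w := by
  constructor
  · rintro ⟨u, ⟨t, rfl⟩, vs, hlen, hne, hpw, rfl⟩
    match vs, hlen with
    | [a,b,c,d,e], _ =>
    have ha0 : a ≠ [] := hne a (by simp)
    simp only [List.pairwise_cons, List.mem_cons, List.not_mem_nil, or_false,
      List.mem_singleton] at hpw
    obtain ⟨hA, hB, hC, hD, -⟩ := hpw
    have hab : a.Perm b := hA b (by simp)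
    have hac : a.Perm c := hA c (by simp)
    have had : a.Perm d := hA d (by simp)
    have hae : a.Perm e := hA e (by simp)
    have hbc : b.Perm c := hab.symm.trans hac
    have hcd : c.Perm d := hac.symm.trans had
    have hde : d.Perm e := had.symm.trans hae
    have hbl : b.length = a.length := hab.length_eq.symm
    have hcl : c.length = a.length := hac.length_eq.symm
    have hdl : d.length = a.length := had.length_eq.symm
    have hel : e.length = a.length := hae.length_eq.symm
    have hL : [a,b,c,d,e].flatten ++ t = a ++ (b ++ (c ++ (d ++ (e ++ t)))) := by simp
    rw [hL]
    set W := a ++ (b ++ (c ++ (d ++ (e ++ t)))) with hW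
    have h1 : W.drop a.length = b ++ (c ++ (d ++ (e ++ t))) := List.drop_left' rfl
    have h2 : W.drop (2*a.length) = c ++ (d ++ (e ++ t)) := by
      rw [show 2*a.length = a.length + a.length by ring, ← List.drop_drop, h1]
      exact List.drop_left' hbl
    have h3 : W.drop (3*a.length) = d ++ (e ++ t) := by
      rw [show 3*a.length = 2*a.length + a.length by ring, ← List.drop_drop, h2]
      exact List.drop_left' hcl
    have h4 : W.drop (4*a.length) = e ++ t := by
      rw [show 4*a.length = 3*a.length + a.length by ring, ← List.drop_drop, h3]
      exact List.drop_left' hdl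
    have t0 : W.take a.length = a := List.take_left' rfl
    have t1 : (W.drop a.length).take a.length = b := by rw [h1]; exact List.take_left' hbl
    have t2 : (W.drop (2*a.length)).take a.length = c := by rw [h2]; exact List.take_left' hcl
    have t3 : (W.drop (3*a.length)).take a.length = d := by rw [h3]; exact List.take_left' hdl
    have t4 : (W.drop (4*a.length)).take a.length = e := by rw [h4]; exact List.take_left' hel
    have hwlen : 5*a.length ≤ W.length := by
      rw [hW]; simp only [List.length_append]; omega
    refine ⟨a.length, by omega, List.length_pos_iff.mpr ha0, hwlen, ?_⟩
    intro j hj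
    interval_cases j
    · rw [show 0*a.length = 0 by ring, List.drop_zero, t0, Nat.zero_add, t1]; exact hab
    · rw [Nat.one_mul, show a.length + a.length = 2*a.length by ring, t1, t2]; exact hbc
    · rw [show 2*a.length + a.length = 3*a.length by ring, t2, t3]; exact hcd
    · rw [show 3*a.length + a.length = 4*a.length by ring, t3, t4]; exact hde
  · rintro ⟨m, hmlt, hm0, hm5, hj⟩
    have hbd : ∀ j, j ≤ 4 → j*m + m ≤ w.length := by
      intro j hj4
      calc j*m + m = (j+1)*m := by ring
        _ ≤ 5*m := Nat.mul_le_mul_right m (by omega)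
        _ ≤ w.length := hm5
    have p : ∀ j, j < 4 → ((w.drop (j*m)).take m).Perm ((w.drop ((j+1)*m)).take m) := by
      intro j h
      have := hj j h
      rwa [show j*m + m = (j+1)*m by ring] at this
    refine ⟨w.take (5*m), List.take_prefix _ _,
      (List.range 5).map (fun j => (w.drop (j*m)).take m), by simp, ?_, ?_, take_blocks w m 5⟩
    · intro v hv
      simp only [List.mem_map, List.mem_range] at hv
      obtain ⟨j, hj5, rfl⟩ := hv
      have := hbd j (by omega)
      rw [← List.length_pos_iff, List.length_take, List.length_drop]
      omega
    · rw [show List.range 5 = [0,1,2,3,4] from rfl]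
      simp only [List.map_cons, List.map_nil]
      exact pairwise_perm_chain (by simpa using p 0 (by norm_num))
        (by simpa using p 1 (by norm_num)) (by simpa using p 2 (by norm_num))
        (by simpa using p 3 (by norm_num))

lemma contains_iff (w : List Bool) :
    ContainsAbelianPow 5 w ↔ ∃ i < w.length + 1, PreAP (w.drop i) := by
  constructor
  · rintro ⟨u, hinf, hap⟩
    obtain ⟨t2, hpre, s, rfl⟩ := List.infix_iff_prefix_suffix.1 hinf
    refine ⟨s.length, by simp only [List.length_append]; omega, ?_⟩
    rw [List.drop_left]
    exact (preAP_iff t2).1 ⟨u, hpre, hap⟩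
  · rintro ⟨i, hi, hp⟩
    obtain ⟨u, hpre, hap⟩ := (preAP_iff _).2 hp
    exact ⟨u, List.infix_iff_prefix_suffix.2 ⟨w.drop i, hpre, List.drop_suffix i w⟩, hap⟩

def step (w : List Bool) : List (List Bool) :=
  (if [la,la] <+: w ∨ PreAP (la::w) then [] else [la::w]) ++
  (if [lb] <+: w ∨ PreAP (lb::w) then [] else [lb::w])

def valids : Nat → List (List Bool)
  | 0 => [[]]
  | n+1 => (valids n).flatMap step

lemma complete : ∀ n (w : List Bool), w.length = n → ¬ [la,la,la] <:+: w →
    ¬ [lb,lb] <:+: w → ¬ ContainsAbelianPow 5 w → w ∈ valids n := by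
  intro n
  induction n with
  | zero =>
      intro w h _ _ _
      simp only [valids, List.mem_singleton]
      exact List.eq_nil_of_length_eq_zero h
  | succ n ih =>
      intro w hlen h3 h2 hap
      match w with
      | c :: w' =>
      have htail : ∀ u : List Bool, u <:+: w' → u <:+: c :: w' :=
        fun u h => h.trans (List.suffix_cons c w').isInfix
      have hw' : w' ∈ valids n := by
        refine ih w' (by simpa using hlen) (fun h => h3 (htail _ h)) (fun h => h2 (htail _ h)) ?_
        rintro ⟨u, hu, hap5⟩
        exact hap ⟨u, htail u hu, hap5⟩
      show c :: w' ∈ (valids n).flatMap step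
      refine List.mem_flatMap.2 ⟨w', hw', ?_⟩
      unfold step
      cases c with
      | false =>
          have hP : ¬ ([la,la] <+: w' ∨ PreAP (la::w')) := by
            rintro (h | h)
            · exact h3 (List.IsPrefix.isInfix (List.cons_prefix_cons.2 ⟨rfl, h⟩))
            · obtain ⟨u, hpre, hap5⟩ := (preAP_iff _).2 h
              exact hap ⟨u, hpre.isInfix, hap5⟩
          rw [if_neg hP]
          exact List.mem_append_left _ (by simp [la])
      | true =>
          have hP : ¬ ([lb] <+: w' ∨ PreAP (lb::w')) := by
            rintro (h | h)
            · exact h2 (List.IsPrefix.isInfix (List.cons_prefix_cons.2 ⟨rfl, h⟩))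
            · obtain ⟨u, hpre, hap5⟩ := (preAP_iff _).2 h
              exact hap ⟨u, hpre.isInfix, hap5⟩
          rw [if_neg hP]
          exact List.mem_append_right _ (by simp [lb])

lemma valids25 : valids 25 = [] := by decide

/-- every binary word of length 25 avoiding `aaa` and `bb` contains an abelian
5-power, and `aababaababaababaababaaba` (length 24) avoids both and has no abelian 5-power. -/
theorem length25_aaa_bb_free_has_abelian_5power :
    (∀ w : List Bool, w.length = 25 → ¬ [la,la,la] <:+: w → ¬ [lb,lb] <:+: w →
      ContainsAbelianPow 5 w) ∧
    (¬ [la,la,la] <:+: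
        [la, la, lb, la, lb, la, la, lb, la, lb, la, la, lb, la, lb, la, la, lb, la, lb, la, la, lb, la] ∧
      ¬ [lb,lb] <:+:
        [la, la, lb, la, lb, la, la, lb, la, lb, la, la, lb, la, lb, la, la, lb, la, lb, la, la, lb, la] ∧
      ¬ ContainsAbelianPow 5
        [la, la, lb, la, lb, la, la, lb, la, lb, la, la, lb, la, lb, la, la, lb, la, lb, la, la, lb, la]) := by
  refine ⟨?_, by decide, by decide, ?_⟩
  · intro w h25 h3 h2
    by_contra hap
    have := complete 25 w h25 h3 h2 hap
    rw [valids25] at this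
    simp at this
  · rw [contains_iff]
    decide
end
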